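/- Let N = s·p^{n+1} with p an odd prime, gcd(s,p)=1, and 0 ≤ r ≤ n, and let L = ℚ(ζ_N), K = ℚ(ζ_N^{p^{n−r}}). For any x_0, …, x_{p^{n−r}−1} ∈ K, the element x = ∑_{k=0}^{p^{n−r}−1} x_k ζ_N^k satisfies Tr_{L/ℚ}(x·conj(x)) = p^{n−r} · ∑_{k=0}^{p^{n−r}−1} Tr_{K/ℚ}(x_k·conj(x_k)). -/

import Mathlib

open IntermediateField Polynomial


lemma aux_trace_pow_eq_zero {F E : Type*} [Field F] [Field E] [Algebra F E]
    [FiniteDimensional F E] {z : E} {m a : ℕ}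
    (hdeg : (minpoly F z).natDegree = m) (hfin : Module.finrank F E = m)
    {c : F} (hzm : z ^ m = algebraMap F E c)
    (ha : 0 < a) (ham : a < m) :
    Algebra.trace F E (z ^ a) = 0 := by
  classical
  have li : LinearIndependent F fun i : Fin m => z ^ (i : ℕ) := by
    have := linearIndependent_pow (K := F) z
    rwa [hdeg] at this
  haveI : Nonempty (Fin m) := ⟨⟨0, by omega⟩⟩
  have hcard : Fintype.card (Fin m) = Module.finrank F E := by simp [hfin]
  set b := basisOfLinearIndependentOfCardEqFinrank li hcard with hbdef
  have hb : ∀ i : Fin m, b i = z ^ (i : ℕ) := fun i => by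
    rw [hbdef, coe_basisOfLinearIndependentOfCardEqFinrank]
  rw [Algebra.trace_eq_matrix_trace b, Matrix.trace]
  apply Finset.sum_eq_zero
  intro i _
  rw [Matrix.diag_apply, Algebra.leftMulMatrix_eq_repr_mul]
  rcases lt_or_ge (a + (i : ℕ)) m with h | h
  · have : z ^ a * b i = b ⟨a + i, h⟩ := by
      rw [hb, hb, ← pow_add]
    rw [this, b.repr_self, Finsupp.single_apply]
    have : (⟨a + i, h⟩ : Fin m) ≠ i := by
      intro hh
      have h3 : a + (i:ℕ) = (i:ℕ) := congrArg Fin.val hh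
      omega
    simp [this]
  · have h2 : a + (i : ℕ) - m < m := by omega
    have : z ^ a * b i = c • b ⟨a + i - m, h2⟩ := by
      rw [hb, hb, ← pow_add, Algebra.smul_def, ← hzm, ← pow_add]
      congr 1
      show a + (i:ℕ) = m + (a + (i:ℕ) - m)
      omega
    rw [this, map_smul, b.repr_self, Finsupp.smul_apply, Finsupp.single_apply]
    have : (⟨a + i - m, h2⟩ : Fin m) ≠ i := by
      intro hh
      have h3 : a + (i:ℕ) - m = (i:ℕ) := congrArg Fin.val hh
      omega
    simp [this]


set_option synthInstance.maxHeartbeats 400000 in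
set_option maxHeartbeats 1000000 in
/-- For N = s·p^{n+1} (p an odd prime, gcd(s,p)=1), 0 ≤ r ≤ n, L = ℚ(ζ_N),
K = ℚ(ζ_N^{p^{n−r}}) and x_k ∈ K, the element x = ∑_k x_k ζ_N^k satisfies
Tr_{L/ℚ}(x·conj(x)) = p^{n−r} · ∑_k Tr_{K/ℚ}(x_k·conj(x_k)). -/
theorem stmt12 (p s n r : ℕ) (hp : p.Prime) (hpodd : Odd p) (hs : 0 < s)
    (hsp : Nat.Coprime s p) (hr : r ≤ n)
    (N : ℕ) (hN : N = s * p ^ (n + 1))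
    (ζ : ℂ) (hζ : IsPrimitiveRoot ζ N)
    (L : IntermediateField ℚ ℂ) (hL : L = ℚ⟮ζ⟯)
    (K : IntermediateField ℚ ℂ) (hK : K = ℚ⟮ζ ^ (p ^ (n - r))⟯)
    (x : Fin (p ^ (n - r)) → K)
    (y : L) (hy : (y : ℂ) = ∑ k : Fin (p ^ (n - r)), (x k : ℂ) * ζ ^ (k : ℕ))
    (y' : L) (hy' : (y' : ℂ) = (starRingEnd ℂ) (y : ℂ))
    (x' : Fin (p ^ (n - r)) → K)
    (hx' : ∀ k, (x' k : ℂ) = (starRingEnd ℂ) (x k : ℂ)) :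
    Algebra.trace ℚ L (y * y')
      = (p ^ (n - r) : ℚ) * ∑ k : Fin (p ^ (n - r)), Algebra.trace ℚ K (x k * x' k) := by
  classical
  subst hL hK
  revert x x' hy hx'
  generalize hmdef : p ^ (n - r) = m
  intro x x' hx' hy
  -- numerics
  have hm0 : 0 < m := hmdef ▸ pow_pos hp.pos _
  have hN0 : 0 < N := by
    rw [hN]; exact Nat.mul_pos hs (pow_pos hp.pos _)
  have hmN : m ∣ N := by
    rw [hN, ← hmdef]
    exact Dvd.dvd.mul_left (pow_dvd_pow p (by omega)) s
  set M : ℕ := N / m with hMdef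
  have hNM : N = m * M := (Nat.mul_div_cancel' hmN).symm
  have hM : M = s * p ^ (r + 1) := by
    have : N = m * (s * p ^ (r + 1)) := by
      rw [hN, ← hmdef, show p ^ (n - r) * (s * p ^ (r + 1)) = s * (p ^ (n - r) * p ^ (r + 1)) by
        ring, ← pow_add, show n - r + (r + 1) = n + 1 by omega]
    rw [hMdef, this, Nat.mul_div_cancel_left _ hm0]
  have hM0 : 0 < M := by rw [hM]; exact Nat.mul_pos hs (pow_pos hp.pos _)
  -- roots of unity
  have hζN : ζ ^ N = 1 := hζ.pow_eq_one
  have hξ : IsPrimitiveRoot (ζ ^ m) M := by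
    refine hζ.pow hN0 ?_
    rw [hNM]
  -- field inclusions
  have hKL : ℚ⟮ζ ^ m⟯ ≤ ℚ⟮ζ⟯ := by
    rw [adjoin_simple_le_iff]
    exact pow_mem (mem_adjoin_simple_self ℚ ζ) m
  letI : Algebra ℚ⟮ζ ^ m⟯ ℚ⟮ζ⟯ := (inclusion hKL).toAlgebra
  haveI : IsScalarTower ℚ ℚ⟮ζ ^ m⟯ ℚ⟮ζ⟯ :=
    IsScalarTower.of_algebraMap_eq (fun c => Subtype.ext rfl)
  have hcoe : ∀ c : ℚ⟮ζ ^ m⟯, ((algebraMap ℚ⟮ζ ^ m⟯ ℚ⟮ζ⟯ c : ℚ⟮ζ⟯) : ℂ) = (c : ℂ) :=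
    fun c => rfl
  -- integrality and finite dimensionality
  have hζint : IsIntegral ℚ ζ := by
    refine ⟨X ^ N - 1, monic_X_pow_sub_C 1 hN0.ne', ?_⟩
    simp [hζN]
  have hξint : IsIntegral ℚ (ζ ^ m) := hζint.pow m
  haveI : FiniteDimensional ℚ ℚ⟮ζ⟯ := adjoin.finiteDimensional hζint
  haveI : FiniteDimensional ℚ ℚ⟮ζ ^ m⟯ := adjoin.finiteDimensional hξint
  haveI : FiniteDimensional ℚ⟮ζ ^ m⟯ ℚ⟮ζ⟯ := FiniteDimensional.right ℚ ℚ⟮ζ ^ m⟯ ℚ⟮ζ⟯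
  -- finrank computations
  have hfinL : Module.finrank ℚ ℚ⟮ζ⟯ = N.totient := by
    rw [adjoin.finrank hζint, ← cyclotomic_eq_minpoly_rat hζ hN0, natDegree_cyclotomic]
  have hfinK : Module.finrank ℚ ℚ⟮ζ ^ m⟯ = M.totient := by
    rw [adjoin.finrank hξint, ← cyclotomic_eq_minpoly_rat hξ hM0, natDegree_cyclotomic]
  have htot : N.totient = m * M.totient := by
    rw [hN, hM, Nat.totient_mul (hsp.pow_right _), Nat.totient_mul (hsp.pow_right _),
      Nat.totient_prime_pow hp (Nat.succ_pos n), Nat.totient_prime_pow hp (Nat.succ_pos r),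
      ← hmdef]
    rw [show n + 1 - 1 = (n - r) + r by omega, pow_add, show r + 1 - 1 = r by omega]
    ring
  have hfinKL : Module.finrank ℚ⟮ζ ^ m⟯ ℚ⟮ζ⟯ = m := by
    have hmul := Module.finrank_mul_finrank ℚ ℚ⟮ζ ^ m⟯ ℚ⟮ζ⟯
    rw [hfinK, hfinL, htot, mul_comm m] at hmul
    exact Nat.eq_of_mul_eq_mul_left (Nat.totient_pos.2 hM0) hmul
  -- the generator of L over K
  let ζL : ℚ⟮ζ⟯ := AdjoinSimple.gen ℚ ζ
  let ξK : ℚ⟮ζ ^ m⟯ := AdjoinSimple.gen ℚ (ζ ^ m)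
  have hζLc : (ζL : ℂ) = ζ := rfl
  have hξKc : (ξK : ℂ) = ζ ^ m := rfl
  have hζLm : ζL ^ m = algebraMap ℚ⟮ζ ^ m⟯ ℚ⟮ζ⟯ ξK := by
    apply Subtype.ext
    push_cast
    rfl
  -- K⟮ζL⟯ = ⊤
  have htop : ℚ⟮ζ ^ m⟯⟮ζL⟯ = (⊤ : IntermediateField ℚ⟮ζ ^ m⟯ ℚ⟮ζ⟯) := by
    have h1 : adjoin ℚ {ζL} = (⊤ : IntermediateField ℚ ℚ⟮ζ⟯) := by
      apply lift_injective
      erw [lift_adjoin_simple, lift_top]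
      rfl
    have h2 : restrictScalars ℚ (ℚ⟮ζ ^ m⟯⟮ζL⟯) = ⊤ := by
      rw [eq_top_iff, ← h1]
      exact adjoin_le_iff.2 (Set.singleton_subset_iff.2 (mem_adjoin_simple_self _ ζL))
    exact restrictScalars_injective ℚ (by rw [h2, restrictScalars_top])
  have hζLint : IsIntegral ℚ⟮ζ ^ m⟯ ζL := IsIntegral.of_finite _ _
  have hdeg : (minpoly ℚ⟮ζ ^ m⟯ ζL).natDegree = m := by
    rw [← adjoin.finrank hζLint, htop, finrank_top']
    exact hfinKL
  -- trace of powers of ζL over K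
  have htr : ∀ e : ℕ, ¬ (m ∣ e) → Algebra.trace ℚ⟮ζ ^ m⟯ ℚ⟮ζ⟯ (ζL ^ e) = 0 := by
    intro e he
    have ha : 0 < e % m := Nat.pos_of_ne_zero (fun h0 => he (Nat.dvd_of_mod_eq_zero h0))
    have ham : e % m < m := Nat.mod_lt _ hm0
    have hsplit : ζL ^ e = algebraMap _ _ (ξK ^ (e / m)) * ζL ^ (e % m) := by
      rw [map_pow, ← hζLm, ← pow_mul, ← pow_add, Nat.div_add_mod]
    rw [hsplit, ← Algebra.smul_def, map_smul,
      aux_trace_pow_eq_zero hdeg hfinKL hζLm ha ham, smul_zero]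
  have htr1 : Algebra.trace ℚ⟮ζ ^ m⟯ ℚ⟮ζ⟯ (1 : ℚ⟮ζ⟯) = (m : ℚ⟮ζ ^ m⟯) := by
    rw [show (1 : ℚ⟮ζ⟯) = algebraMap ℚ⟮ζ ^ m⟯ ℚ⟮ζ⟯ (1 : ℚ⟮ζ ^ m⟯) by rw [map_one],
      Algebra.trace_algebraMap, hfinKL, nsmul_eq_mul, mul_one]
  -- conjugation
  have habsζ : ‖ζ‖ = 1 := Complex.norm_eq_one_of_pow_eq_one hζN hN0.ne'
  have hconj : ∀ k : ℕ, (starRingEnd ℂ) (ζ ^ k) = ζ ^ ((N - 1) * k) := by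
    intro k
    have h1 : ‖ζ ^ k‖ = 1 := by rw [norm_pow, habsζ, one_pow]
    rw [← Complex.inv_eq_conj h1]
    have hexp : (N - 1) * k + k = N * k := by
      have hk : k ≤ N * k := Nat.le_mul_of_pos_left k hN0
      rw [Nat.sub_one_mul]
      omega
    refine inv_eq_of_mul_eq_one_left ?_
    rw [← pow_add, hexp, pow_mul, hζN, one_pow]
  -- expressions for y and y' inside L
  have hyL : y = ∑ k : Fin m, algebraMap ℚ⟮ζ ^ m⟯ ℚ⟮ζ⟯ (x k) * ζL ^ (k : ℕ) := by
    apply Subtype.ext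
    rw [hy]
    push_cast [hcoe, hζLc]
    rfl
  have hy'L : y' = ∑ k : Fin m, algebraMap ℚ⟮ζ ^ m⟯ ℚ⟮ζ⟯ (x' k) * ζL ^ ((N - 1) * (k : ℕ)) := by
    apply Subtype.ext
    rw [hy', hy, map_sum]
    push_cast [hcoe, hζLc]
    refine Finset.sum_congr rfl fun k _ => ?_
    rw [map_mul, ← hx' k, hconj]
  -- per-term traces
  haveI : NeZero m := ⟨hm0.ne'⟩
  have hterm : ∀ k j : Fin m,
      Algebra.trace ℚ⟮ζ ^ m⟯ ℚ⟮ζ⟯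
        ((algebraMap ℚ⟮ζ ^ m⟯ ℚ⟮ζ⟯ (x k) * ζL ^ (k : ℕ)) *
          (algebraMap ℚ⟮ζ ^ m⟯ ℚ⟮ζ⟯ (x' j) * ζL ^ ((N - 1) * (j : ℕ))))
      = if k = j then (x k * x' k) * m else 0 := by
    intro k j
    have hcomb : (algebraMap ℚ⟮ζ ^ m⟯ ℚ⟮ζ⟯ (x k) * ζL ^ (k : ℕ)) *
          (algebraMap ℚ⟮ζ ^ m⟯ ℚ⟮ζ⟯ (x' j) * ζL ^ ((N - 1) * (j : ℕ)))
        = (x k * x' j) • ζL ^ ((k : ℕ) + (N - 1) * (j : ℕ)) := by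
      rw [Algebra.smul_def, map_mul, pow_add]
      ring
    rw [hcomb, map_smul]
    by_cases hkj : k = j
    · subst hkj
      have hexp : (k : ℕ) + (N - 1) * (k : ℕ) = N * (k : ℕ) := by
        have hk : (k : ℕ) ≤ N * (k : ℕ) := Nat.le_mul_of_pos_left _ hN0
        rw [Nat.sub_one_mul]
        omega
      have hone : ζL ^ ((k : ℕ) + (N - 1) * (k : ℕ)) = (1 : ℚ⟮ζ⟯) := by
        apply Subtype.ext
        push_cast [hζLc]
        rw [hexp, pow_mul, hζN, one_pow]
      rw [hone, htr1, if_pos rfl, smul_eq_mul]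
    · have hnd : ¬ (m ∣ (k : ℕ) + (N - 1) * (j : ℕ)) := by
        intro hdvd
        apply hkj
        have h6 : (((k : ℕ) + (N - 1) * (j : ℕ) : ℕ) : ZMod m) = 0 :=
          (ZMod.natCast_eq_zero_iff _ _).2 hdvd
        have h7 : ((N - 1 : ℕ) : ZMod m) = -1 := by
          have h8 : ((N : ℕ) : ZMod m) = 0 := (ZMod.natCast_eq_zero_iff _ _).2 hmN
          rw [Nat.cast_sub hN0, h8, Nat.cast_one, zero_sub]
        push_cast [h7] at h6
        have h5 : (((k : ℕ) : ZMod m)) = ((j : ℕ) : ZMod m) := by linear_combination h6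
        have h9 := congrArg ZMod.val h5
        rw [ZMod.val_cast_of_lt k.isLt, ZMod.val_cast_of_lt j.isLt] at h9
        exact Fin.ext h9
      rw [htr _ hnd, smul_zero, if_neg hkj]
  -- main computation of the relative trace
  have key : Algebra.trace ℚ⟮ζ ^ m⟯ ℚ⟮ζ⟯ (y * y')
      = (m : ℚ⟮ζ ^ m⟯) * ∑ k : Fin m, x k * x' k := by
    rw [hyL, hy'L, Finset.sum_mul_sum, map_sum]
    have h10 : ∀ k : Fin m,
        Algebra.trace ℚ⟮ζ ^ m⟯ ℚ⟮ζ⟯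
          (∑ j : Fin m, (algebraMap ℚ⟮ζ ^ m⟯ ℚ⟮ζ⟯ (x k) * ζL ^ (k : ℕ)) *
            (algebraMap ℚ⟮ζ ^ m⟯ ℚ⟮ζ⟯ (x' j) * ζL ^ ((N - 1) * (j : ℕ))))
        = (x k * x' k) * m := by
      intro k
      rw [map_sum, Finset.sum_congr rfl (fun j _ => hterm k j), Finset.sum_ite_eq]
      simp
    rw [Finset.sum_congr rfl (fun k _ => h10 k), Finset.mul_sum]
    exact Finset.sum_congr rfl fun k _ => mul_comm _ _
  -- descend to ℚ
  rw [← Algebra.trace_trace (S := ℚ⟮ζ ^ m⟯) (y * y'), key, ← nsmul_eq_mul, map_nsmul, map_sum,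
    nsmul_eq_mul]
  push_cast [← hmdef]
  ring
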